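/- Fix a constant C1 ≥ 1. There exist c > 0 and N such that for all n ≥ N the following holds: let θ be the smallest integer greater than n/2 such that Pr_{x uniform on {0,1}^n}[L(x) > θ] ≤ 1/n^{C1}, and let f0 : {0,1}^n → {0,1} be defined by f0(x) = 1 if and only if L(x) > θ. Then for every δ with 1/n ≤ δ ≤ 1/2, c/n^{C1+1} ≤ NS_δ[f0] ≤ 2/n^{C1}. -/

import Mathlib

open Finset

/-- Level (Hamming weight) of a point of the Boolean cube. -/
def level {n : ℕ} (x : Fin n → Bool) : ℕ :=
  (Finset.univ.filter (fun i => x i = true)).card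

/-- Probability, under the noise distribution `T_δ`, of obtaining the pair `(x, z)`:
`x` is uniform on `{0,1}^n` and each coordinate of `z` independently equals the
corresponding coordinate of `x` with probability `1 − δ` and is flipped with
probability `δ`. -/
noncomputable def noisePairProb (n : ℕ) (δ : ℝ) (x z : Fin n → Bool) : ℝ :=
  (1 / 2 ^ n) * ∏ i : Fin n, (if z i = x i then 1 - δ else δ)

/-- Noise sensitivity: `NS_δ[f] = Pr_{(x,z)∼T_δ}[f(x) ≠ f(z)]`. -/
noncomputable def NS (n : ℕ) (δ : ℝ) (f : (Fin n → Bool) → Bool) : ℝ :=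
  ∑ x : Fin n → Bool, ∑ z : Fin n → Bool,
    noisePairProb n δ x z * (if f x ≠ f z then 1 else 0)

/-- Influence: `I[f] = n · Pr_{x, i}[f(x) ≠ f(x^{⊕i})]`. -/
noncomputable def influence (n : ℕ) (f : (Fin n → Bool) → Bool) : ℝ :=
  (1 / 2 ^ n) * ∑ x : Fin n → Bool, ∑ i : Fin n,
    (if f x ≠ f (Function.update x i (!(x i))) then (1 : ℝ) else 0)

/-- Bias: `B[f] = Pr_{x uniform}[f(x) = 1]`. -/
noncomputable def bias (n : ℕ) (f : (Fin n → Bool) → Bool) : ℝ :=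
  (1 / 2 ^ n) * ∑ x : Fin n → Bool, (if f x = true then (1 : ℝ) else 0)

/-- `tailProb n θ = Pr_{x uniform on {0,1}^n}[L(x) > θ]`. -/
noncomputable def tailProb (n θ : ℕ) : ℝ :=
  (1 / 2 ^ n) * ∑ x : Fin n → Bool, (if θ < level x then (1 : ℝ) else 0)

/-- `isMinimalThreshold C1 n θ` says that `θ` is the smallest integer greater than
`n/2` such that `Pr[L(x) > θ] ≤ 1/n^{C1}`. -/
def isMinimalThreshold (C1 : ℝ) (n θ : ℕ) : Prop :=
  (n : ℝ) / 2 < (θ : ℝ) ∧ tailProb n θ ≤ 1 / (n : ℝ) ^ C1 ∧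
    ∀ θ' : ℕ, (n : ℝ) / 2 < (θ' : ℝ) → tailProb n θ' ≤ 1 / (n : ℝ) ^ C1 → θ ≤ θ'

namespace ThresholdNSAux

/-! ### Fourier-analytic part -/

noncomputable def sgn (b : Bool) : ℝ := if b then -1 else 1

lemma sgn_mul_self (b : Bool) : sgn b * sgn b = 1 := by
  cases b <;> norm_num [sgn]

noncomputable def chi {n : ℕ} (S : Finset (Fin n)) (x : Fin n → Bool) : ℝ :=
  ∏ i ∈ S, sgn (x i)

noncomputable def coef (n : ℕ) (f : (Fin n → Bool) → Bool) (S : Finset (Fin n)) : ℝ :=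
  (1 / 2 ^ n) * ∑ x : Fin n → Bool, sgn (f x) * chi S x

lemma cube_sum_one (n : ℕ) : ∑ _x : Fin n → Bool, (1 : ℝ) = 2 ^ n := by
  rw [Finset.sum_const, Finset.card_univ, Fintype.card_fun, Fintype.card_bool,
    Fintype.card_fin, nsmul_eq_mul, mul_one]
  push_cast
  ring

lemma kernel_sum_one (n : ℕ) (δ : ℝ) (x : Fin n → Bool) :
    ∑ z : Fin n → Bool, ∏ i, (if z i = x i then 1 - δ else δ) = 1 := by
  have h := Finset.prod_univ_sum (fun _ : Fin n => (Finset.univ : Finset Bool))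
    (fun i b => if b = x i then 1 - δ else δ)
  rw [Fintype.piFinset_univ] at h
  rw [← h, Finset.prod_eq_one]
  intro i _
  rw [Fintype.sum_bool]
  cases hx : x i <;> simp

lemma kernel_expand (n : ℕ) (δ : ℝ) (x z : Fin n → Bool) :
    (∏ i, (if z i = x i then 1 - δ else δ)) =
      (1 / 2 ^ n) * ∑ S : Finset (Fin n),
        (1 - 2 * δ) ^ S.card * (chi S x * chi S z) := by
  have h1 : ∀ i : Fin n, (if z i = x i then 1 - δ else δ)
      = ((1 - 2 * δ) * (sgn (x i) * sgn (z i)) + 1) / 2 := by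
    intro i; cases hx : x i <;> cases hz : z i <;> simp [sgn, hx, hz] <;> try ring
  calc (∏ i, (if z i = x i then 1 - δ else δ))
      = ∏ i, (((1 - 2 * δ) * (sgn (x i) * sgn (z i)) + 1) / 2) :=
        Finset.prod_congr rfl fun i _ => h1 i
    _ = (∏ i : Fin n, ((1 - 2 * δ) * (sgn (x i) * sgn (z i)) + 1)) / 2 ^ n := by
        rw [Finset.prod_div_distrib, Finset.prod_const, Finset.card_univ, Fintype.card_fin]
    _ = (∑ S : Finset (Fin n), (1 - 2 * δ) ^ S.card * (chi S x * chi S z)) / 2 ^ n := by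
        rw [Finset.prod_add, Finset.powerset_univ]
        congr 1
        refine Finset.sum_congr rfl fun S _ => ?_
        simp only [Finset.prod_const_one, mul_one, Finset.prod_mul_distrib,
          Finset.prod_const, chi]
        all_goals try rw [Finset.prod_mul_distrib]
        all_goals try ring
    _ = (1 / 2 ^ n) * ∑ S : Finset (Fin n), (1 - 2 * δ) ^ S.card * (chi S x * chi S z) := by
        ring

lemma chi_orthogonal (n : ℕ) (x y : Fin n → Bool) :
    ∑ S : Finset (Fin n), chi S x * chi S y = if x = y then (2 : ℝ) ^ n else 0 := by
  have h0 : ∀ S : Finset (Fin n), chi S x * chi S y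
      = ∏ i ∈ S, (sgn (x i) * sgn (y i)) := by
    intro S; rw [chi, chi, Finset.prod_mul_distrib]
  simp_rw [h0]
  have h2 := Finset.prod_add (fun i : Fin n => sgn (x i) * sgn (y i))
    (fun _ : Fin n => (1 : ℝ)) Finset.univ
  rw [Finset.powerset_univ] at h2
  simp only [Finset.prod_const_one, mul_one] at h2
  rw [← h2]
  by_cases hxy : x = y
  · subst hxy
    rw [if_pos rfl]
    rw [Finset.prod_eq_pow_card (b := (2 : ℝ))]
    · rw [Finset.card_univ, Fintype.card_fin]
    · intro i _; cases hx : x i <;> norm_num [sgn, hx]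
  · rw [if_neg hxy]
    have hex : ∃ i, x i ≠ y i := by
      by_contra h; push_neg at h; exact hxy (funext h)
    obtain ⟨i, hi⟩ := hex
    apply Finset.prod_eq_zero (Finset.mem_univ i)
    cases hx : x i <;> cases hy : y i <;> simp_all [sgn]

lemma sum_sgn_chi (n : ℕ) (f : (Fin n → Bool) → Bool) (S : Finset (Fin n)) :
    ∑ x : Fin n → Bool, sgn (f x) * chi S x = 2 ^ n * coef n f S := by
  rw [coef]
  have h2 : (2 : ℝ) ^ n ≠ 0 := by positivity
  field_simp

lemma NS_eq (n : ℕ) (δ : ℝ) (f : (Fin n → Bool) → Bool) :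
    NS n δ f = 1 / 2 - 1 / 2 * ∑ S : Finset (Fin n),
      (1 - 2 * δ) ^ S.card * (coef n f S) ^ 2 := by
  have h2 : (2 : ℝ) ^ n ≠ 0 := by positivity
  have hind : ∀ x z : Fin n → Bool, (if f x ≠ f z then (1 : ℝ) else 0)
      = (1 - sgn (f x) * sgn (f z)) / 2 := by
    intro x z; cases hfx : f x <;> cases hfz : f z <;> norm_num [hfx, hfz, sgn]
  have hterm : ∀ x z : Fin n → Bool,
      noisePairProb n δ x z * (if f x ≠ f z then (1 : ℝ) else 0)
      = (1 / 2 ^ n) * (1 / 2) * ((∏ i, (if z i = x i then 1 - δ else δ))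
          - (∏ i, (if z i = x i then 1 - δ else δ)) * (sgn (f x) * sgn (f z))) := by
    intro x z; rw [hind, noisePairProb]; ring
  have hA : ∑ x : Fin n → Bool, ∑ z : Fin n → Bool,
      (∏ i, (if z i = x i then 1 - δ else δ)) = (2 : ℝ) ^ n := by
    calc ∑ x : Fin n → Bool, ∑ z : Fin n → Bool,
        (∏ i, (if z i = x i then 1 - δ else δ))
        = ∑ _x : Fin n → Bool, (1 : ℝ) :=
          Finset.sum_congr rfl fun x _ => kernel_sum_one n δ x
      _ = 2 ^ n := cube_sum_one n
  have hB : ∑ x : Fin n → Bool, ∑ z : Fin n → Bool,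
      (∏ i, (if z i = x i then 1 - δ else δ)) * (sgn (f x) * sgn (f z))
      = (1 / 2 ^ n) * ∑ S : Finset (Fin n),
          (1 - 2 * δ) ^ S.card * ((2 ^ n * coef n f S) * (2 ^ n * coef n f S)) := by
    have h1 : ∀ x z : Fin n → Bool,
        (∏ i, (if z i = x i then 1 - δ else δ)) * (sgn (f x) * sgn (f z))
        = (1 / 2 ^ n) * ∑ S : Finset (Fin n),
            (1 - 2 * δ) ^ S.card * ((sgn (f x) * chi S x) * (sgn (f z) * chi S z)) := by
      intro x z
      rw [kernel_expand n δ x z, mul_assoc]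
      congr 1
      rw [Finset.sum_mul]
      exact Finset.sum_congr rfl fun S _ => by ring
    simp_rw [h1, ← Finset.mul_sum]
    congr 1
    rw [show (∑ x : Fin n → Bool, ∑ z : Fin n → Bool, ∑ S : Finset (Fin n),
        (1 - 2 * δ) ^ S.card * ((sgn (f x) * chi S x) * (sgn (f z) * chi S z)))
        = ∑ x : Fin n → Bool, ∑ S : Finset (Fin n), ∑ z : Fin n → Bool,
            (1 - 2 * δ) ^ S.card * ((sgn (f x) * chi S x) * (sgn (f z) * chi S z)) from
      Finset.sum_congr rfl fun x _ => Finset.sum_comm]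
    rw [Finset.sum_comm]
    refine Finset.sum_congr rfl fun S _ => ?_
    rw [← sum_sgn_chi n f S, Finset.sum_mul_sum, Finset.mul_sum]
    refine Finset.sum_congr rfl fun x _ => ?_
    rw [Finset.mul_sum]
    all_goals try exact Finset.sum_congr rfl fun z _ => by ring
  calc NS n δ f
      = ∑ x : Fin n → Bool, ∑ z : Fin n → Bool,
          ((1 / 2 ^ n) * (1 / 2) * ((∏ i, (if z i = x i then 1 - δ else δ))
            - (∏ i, (if z i = x i then 1 - δ else δ)) * (sgn (f x) * sgn (f z)))) := by
        rw [NS]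
        exact Finset.sum_congr rfl fun x _ => Finset.sum_congr rfl fun z _ => hterm x z
    _ = (1 / 2 ^ n) * (1 / 2) *
          ((∑ x : Fin n → Bool, ∑ z : Fin n → Bool,
            (∏ i, (if z i = x i then 1 - δ else δ)))
          - ∑ x : Fin n → Bool, ∑ z : Fin n → Bool,
              (∏ i, (if z i = x i then 1 - δ else δ)) * (sgn (f x) * sgn (f z))) := by
        rw [← Finset.sum_sub_distrib]
        rw [Finset.mul_sum]
        refine Finset.sum_congr rfl fun x _ => ?_
        rw [← Finset.sum_sub_distrib, Finset.mul_sum]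
    _ = 1 / 2 - 1 / 2 * ∑ S : Finset (Fin n),
          (1 - 2 * δ) ^ S.card * (coef n f S) ^ 2 := by
        have hpull : ∑ S : Finset (Fin n),
            (1 - 2 * δ) ^ S.card * ((2 ^ n * coef n f S) * (2 ^ n * coef n f S))
            = ((2 : ℝ) ^ n * 2 ^ n) * ∑ S : Finset (Fin n),
                (1 - 2 * δ) ^ S.card * (coef n f S) ^ 2 := by
          rw [Finset.mul_sum]
          exact Finset.sum_congr rfl fun S _ => by ring
        rw [hA, hB, hpull]
        field_simp

lemma parseval (n : ℕ) (f : (Fin n → Bool) → Bool) :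
    ∑ S : Finset (Fin n), (coef n f S) ^ 2 = 1 := by
  have h2 : (2 : ℝ) ^ n ≠ 0 := by positivity
  have h1 : ∀ S : Finset (Fin n), (coef n f S) ^ 2
      = (1 / 2 ^ n) * (1 / 2 ^ n) * ∑ x : Fin n → Bool, ∑ y : Fin n → Bool,
          (sgn (f x) * sgn (f y)) * (chi S x * chi S y) := by
    intro S
    calc (coef n f S) ^ 2
        = (1 / 2 ^ n) * (1 / 2 ^ n) * ((∑ x : Fin n → Bool, sgn (f x) * chi S x)
            * (∑ y : Fin n → Bool, sgn (f y) * chi S y)) := by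
          rw [coef]; ring
      _ = (1 / 2 ^ n) * (1 / 2 ^ n) * ∑ x : Fin n → Bool, ∑ y : Fin n → Bool,
            (sgn (f x) * sgn (f y)) * (chi S x * chi S y) := by
          rw [Finset.sum_mul_sum]
          congr 1
          exact Finset.sum_congr rfl fun x _ => Finset.sum_congr rfl fun y _ => by ring
  simp_rw [h1, ← Finset.mul_sum]
  have h3 : ∑ S : Finset (Fin n), ∑ x : Fin n → Bool, ∑ y : Fin n → Bool,
      (sgn (f x) * sgn (f y)) * (chi S x * chi S y)
      = (2 : ℝ) ^ n * 2 ^ n := by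
    rw [Finset.sum_comm]
    have hx : ∀ x : Fin n → Bool, ∑ S : Finset (Fin n), ∑ y : Fin n → Bool,
        (sgn (f x) * sgn (f y)) * (chi S x * chi S y) = (2 : ℝ) ^ n := by
      intro x
      rw [Finset.sum_comm]
      have hy : ∀ y : Fin n → Bool, ∑ S : Finset (Fin n),
          (sgn (f x) * sgn (f y)) * (chi S x * chi S y)
          = if x = y then (sgn (f x) * sgn (f y)) * 2 ^ n else 0 := by
        intro y
        rw [← Finset.mul_sum, chi_orthogonal]
        by_cases hxy : x = y
        · rw [if_pos hxy, if_pos hxy]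
        · rw [if_neg hxy, if_neg hxy, mul_zero]
      rw [Finset.sum_congr rfl fun y _ => hy y]
      rw [Finset.sum_ite_eq]
      rw [if_pos (Finset.mem_univ x), sgn_mul_self, one_mul]
    rw [Finset.sum_congr rfl fun x _ => hx x]
    rw [Finset.sum_const, Finset.card_univ, Fintype.card_fun, Fintype.card_bool,
      Fintype.card_fin, nsmul_eq_mul]
    push_cast
    ring
  rw [h3]
  field_simp

lemma bias_nonneg (n : ℕ) (f : (Fin n → Bool) → Bool) : 0 ≤ bias n f := by
  rw [bias]
  apply mul_nonneg (by positivity)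
  apply Finset.sum_nonneg
  intro x _
  split <;> norm_num

lemma coef_empty (n : ℕ) (f : (Fin n → Bool) → Bool) :
    coef n f ∅ = 1 - 2 * bias n f := by
  have h2 : (2 : ℝ) ^ n ≠ 0 := by positivity
  rw [coef, bias]
  have hterm : ∀ x : Fin n → Bool, sgn (f x) * chi (∅ : Finset (Fin n)) x
      = 1 - 2 * (if f x = true then (1 : ℝ) else 0) := by
    intro x
    rw [chi, Finset.prod_empty, mul_one]
    cases hfx : f x <;> norm_num [sgn, hfx]
  rw [Finset.sum_congr rfl fun x _ => hterm x]
  rw [Finset.sum_sub_distrib, cube_sum_one, ← Finset.mul_sum]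
  all_goals try field_simp
  all_goals try ring

lemma NS_ge (n : ℕ) (f : (Fin n → Bool) → Bool) {δ : ℝ}
    (h0 : 0 ≤ δ) (h2 : δ ≤ 1 / 2) :
    4 * δ * (bias n f * (1 - bias n f)) ≤ NS n δ f := by
  have hρ0 : (0:ℝ) ≤ 1 - 2 * δ := by linarith
  have hρ1 : (1:ℝ) - 2 * δ ≤ 1 := by linarith
  rw [NS_eq]
  have hb : ∑ S : Finset (Fin n), (1 - 2 * δ) ^ S.card * (coef n f S) ^ 2
      ≤ (1 - 2 * δ) * (∑ S : Finset (Fin n), (coef n f S) ^ 2)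
        + (2 * δ) * (coef n f ∅) ^ 2 := by
    have hub : ∀ S : Finset (Fin n), (1 - 2 * δ) ^ S.card * (coef n f S) ^ 2
        ≤ (1 - 2 * δ) * (coef n f S) ^ 2
          + (2 * δ) * (if (∅ : Finset (Fin n)) = S then (coef n f S) ^ 2 else 0) := by
      intro S
      by_cases hS : (∅ : Finset (Fin n)) = S
      · rw [if_pos hS, ← hS]
        simp only [Finset.card_empty, pow_zero, one_mul]
        linarith [sq_nonneg (coef n f ∅)]
      · rw [if_neg hS, mul_zero, add_zero]
        have hcard : S.card ≠ 0 := by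
          intro hc
          exact hS (Finset.card_eq_zero.mp hc).symm
        have : (1 - 2 * δ) ^ S.card ≤ 1 - 2 * δ := pow_le_of_le_one hρ0 hρ1 hcard
        have hc2 : (0 : ℝ) ≤ (coef n f S) ^ 2 := sq_nonneg _
        nlinarith
    calc ∑ S : Finset (Fin n), (1 - 2 * δ) ^ S.card * (coef n f S) ^ 2
        ≤ ∑ S : Finset (Fin n), ((1 - 2 * δ) * (coef n f S) ^ 2
            + (2 * δ) * (if (∅ : Finset (Fin n)) = S then (coef n f S) ^ 2 else 0)) :=
          Finset.sum_le_sum fun S _ => hub S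
      _ = (1 - 2 * δ) * (∑ S : Finset (Fin n), (coef n f S) ^ 2)
            + (2 * δ) * (coef n f ∅) ^ 2 := by
          rw [Finset.sum_add_distrib, ← Finset.mul_sum, ← Finset.mul_sum,
            Finset.sum_ite_eq, if_pos (Finset.mem_univ _)]
  rw [parseval, mul_one] at hb
  rw [coef_empty] at hb
  have hkey : 1 / 2 - 1 / 2 * ((1 - 2 * δ) + (2 * δ) * (1 - 2 * bias n f) ^ 2)
      = 4 * δ * (bias n f * (1 - bias n f)) := by
    ring
  linarith

lemma NS_le (n : ℕ) (f : (Fin n → Bool) → Bool) {δ : ℝ}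
    (h0 : 0 ≤ δ) (h1 : δ ≤ 1) :
    NS n δ f ≤ 2 * bias n f := by
  have hKnn : ∀ x z : Fin n → Bool,
      (0 : ℝ) ≤ ∏ i, (if z i = x i then 1 - δ else δ) := by
    intro x z
    apply Finset.prod_nonneg
    intro i _
    split <;> linarith
  have hPnn : ∀ x z : Fin n → Bool, 0 ≤ noisePairProb n δ x z := by
    intro x z
    rw [noisePairProb]
    exact mul_nonneg (by positivity) (hKnn x z)
  have step : NS n δ f ≤
      (∑ x : Fin n → Bool, ∑ z : Fin n → Bool,
        noisePairProb n δ x z * (if f x = true then 1 else 0))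
      + ∑ x : Fin n → Bool, ∑ z : Fin n → Bool,
          noisePairProb n δ x z * (if f z = true then 1 else 0) := by
    rw [NS, ← Finset.sum_add_distrib]
    refine Finset.sum_le_sum fun x _ => ?_
    rw [← Finset.sum_add_distrib]
    refine Finset.sum_le_sum fun z _ => ?_
    rw [← mul_add]
    refine mul_le_mul_of_nonneg_left ?_ (hPnn x z)
    cases hfx : f x <;> cases hfz : f z <;> norm_num [hfx, hfz]
  have hA : ∑ x : Fin n → Bool, ∑ z : Fin n → Bool,
      noisePairProb n δ x z * (if f x = true then 1 else 0) = bias n f := by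
    rw [bias, Finset.mul_sum]
    refine Finset.sum_congr rfl fun x _ => ?_
    have : ∀ z : Fin n → Bool, noisePairProb n δ x z * (if f x = true then (1:ℝ) else 0)
        = (1 / 2 ^ n * (if f x = true then (1:ℝ) else 0))
          * (∏ i, (if z i = x i then 1 - δ else δ)) := by
      intro z; rw [noisePairProb]; ring
    rw [Finset.sum_congr rfl fun z _ => this z, ← Finset.mul_sum, kernel_sum_one, mul_one]
  have hB : ∑ x : Fin n → Bool, ∑ z : Fin n → Bool,
      noisePairProb n δ x z * (if f z = true then 1 else 0) = bias n f := by
    rw [Finset.sum_comm, bias, Finset.mul_sum]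
    refine Finset.sum_congr rfl fun z _ => ?_
    have hsym : ∀ x : Fin n → Bool,
        (∏ i, (if z i = x i then 1 - δ else δ)) = ∏ i, (if x i = z i then 1 - δ else δ) := by
      intro x
      refine Finset.prod_congr rfl fun i _ => ?_
      cases hx : x i <;> cases hz : z i <;> simp [hx, hz]
    have : ∀ x : Fin n → Bool, noisePairProb n δ x z * (if f z = true then (1:ℝ) else 0)
        = (1 / 2 ^ n * (if f z = true then (1:ℝ) else 0))
          * (∏ i, (if x i = z i then 1 - δ else δ)) := by
      intro x; rw [noisePairProb, hsym]; ring
    rw [Finset.sum_congr rfl fun x _ => this x, ← Finset.mul_sum, kernel_sum_one, mul_one]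
  rw [hA, hB] at step
  linarith

/-! ### Combinatorial part -/

def cubeEquiv (n : ℕ) : (Fin n → Bool) ≃ Finset (Fin n) where
  toFun x := Finset.univ.filter (fun i => x i = true)
  invFun S := fun i => decide (i ∈ S)
  left_inv x := by
    funext i
    by_cases h : x i = true <;> simp [h]
  right_inv S := by
    ext i
    simp

lemma sum_level (n : ℕ) (g : ℕ → ℝ) :
    ∑ x : Fin n → Bool, g (level x) = ∑ k ∈ Finset.range (n + 1), (n.choose k : ℝ) * g k := by
  have h1 : ∑ x : Fin n → Bool, g (level x)
      = ∑ S : Finset (Fin n), g S.card := by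
    have hb := Function.Bijective.sum_comp (cubeEquiv n).bijective
      (fun S : Finset (Fin n) => g S.card)
    exact hb.symm ▸ rfl
  rw [h1, ← Finset.powerset_univ, Finset.sum_powerset, Finset.card_univ, Fintype.card_fin]
  refine Finset.sum_congr rfl fun k _ => ?_
  rw [Finset.sum_congr rfl (fun S hS => by
    rw [(Finset.mem_powersetCard.mp hS).2])]
  rw [Finset.sum_const, Finset.card_powersetCard, Finset.card_univ, Fintype.card_fin,
    nsmul_eq_mul]

def tailB (n m : ℕ) : ℕ := ∑ k ∈ Finset.Icc (m + 1) n, n.choose k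

lemma tailProb_eq (n m : ℕ) : tailProb n m = (tailB n m : ℝ) / 2 ^ n := by
  rw [tailProb, sum_level n (fun k => if m < k then (1 : ℝ) else 0)]
  have h1 : ∑ k ∈ Finset.range (n + 1), (n.choose k : ℝ) * (if m < k then (1:ℝ) else 0)
      = ∑ k ∈ Finset.Icc (m + 1) n, (n.choose k : ℝ) := by
    rw [Finset.sum_congr rfl (fun k _ => by
      rw [mul_ite, mul_one, mul_zero])]
    rw [← Finset.sum_filter]
    congr 1
    ext k
    simp only [Finset.mem_filter, Finset.mem_range, Finset.mem_Icc]
    omega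
  rw [h1, tailB]
  push_cast
  ring

lemma tailProb_nonneg (n m : ℕ) : 0 ≤ tailProb n m := by
  rw [tailProb_eq]; positivity

lemma tailB_reflect (n m : ℕ) :
    tailB n m = ∑ k ∈ Finset.range (n - m), n.choose k := by
  rw [tailB]
  refine Finset.sum_nbij' (fun k => n - k) (fun k => n - k) ?_ ?_ ?_ ?_ ?_
  · intro k hk
    rw [Finset.mem_Icc] at hk
    simp only [Finset.mem_range]
    omega
  · intro k hk
    rw [Finset.mem_range] at hk
    simp only [Finset.mem_Icc]
    omega
  · intro k hk
    rw [Finset.mem_Icc] at hk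
    omega
  · intro k hk
    rw [Finset.mem_range] at hk
    omega
  · intro k hk
    rw [Finset.mem_Icc] at hk
    rw [Nat.choose_symm (by omega)]

lemma middle_small : ∀ n : ℕ, 64 ≤ n → 8 * n.choose (n / 2) ≤ 2 ^ n := by
  intro n hn
  induction n, hn using Nat.le_induction with
  | base =>
      have h : Nat.choose 64 32 = Nat.descFactorial 64 32 / Nat.factorial 32 :=
        Nat.choose_eq_descFactorial_div_factorial 64 32
      norm_num [h]
  | succ n hn ih =>
      obtain ⟨k, hk⟩ : ∃ k, (n + 1) / 2 = k + 1 := ⟨(n + 1) / 2 - 1, by omega⟩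
      have hsplit : (n + 1).choose ((n + 1) / 2) = n.choose k + n.choose (k + 1) := by
        rw [hk]
        exact Nat.choose_succ_succ n k
      have h1 : n.choose k ≤ n.choose (n / 2) := Nat.choose_le_middle k n
      have h2 : n.choose (k + 1) ≤ n.choose (n / 2) := Nat.choose_le_middle (k + 1) n
      calc 8 * (n + 1).choose ((n + 1) / 2)
          = 8 * n.choose k + 8 * n.choose (k + 1) := by rw [hsplit]; ring
        _ ≤ 2 ^ n + 2 ^ n := by
            have := Nat.mul_le_mul_left 8 h1
            have := Nat.mul_le_mul_left 8 h2
            omega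
        _ = 2 ^ (n + 1) := by ring

lemma first_threshold_big (n : ℕ) (hn : 64 ≤ n) :
    (1 : ℝ) / 4 ≤ tailProb n (n / 2 + 1) := by
  set m := n / 2 + 1 with hm
  have hsplit : 2 ^ n ≤ 2 * tailB n m + 3 * n.choose (n / 2) := by
    have e1 : ∑ k ∈ Finset.Ico 0 (n - m), n.choose k
        + ∑ k ∈ Finset.Ico (n - m) (m + 1), n.choose k
        = ∑ k ∈ Finset.Ico 0 (m + 1), n.choose k :=
      Finset.sum_Ico_consecutive _ (by omega) (by omega)
    have e2 : ∑ k ∈ Finset.Ico 0 (m + 1), n.choose k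
        + ∑ k ∈ Finset.Ico (m + 1) (n + 1), n.choose k
        = ∑ k ∈ Finset.Ico 0 (n + 1), n.choose k :=
      Finset.sum_Ico_consecutive _ (by omega) (by omega)
    have etot : ∑ k ∈ Finset.Ico 0 (n + 1), n.choose k = 2 ^ n := by
      rw [← Finset.range_eq_Ico]
      exact Nat.sum_range_choose n
    have eref : ∑ k ∈ Finset.Ico 0 (n - m), n.choose k = tailB n m := by
      rw [← Finset.range_eq_Ico, tailB_reflect]
    have etail : ∑ k ∈ Finset.Ico (m + 1) (n + 1), n.choose k = tailB n m := by
      rw [tailB, Finset.Ico_add_one_right_eq_Icc]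
    have emid : ∑ k ∈ Finset.Ico (n - m) (m + 1), n.choose k ≤ 3 * n.choose (n / 2) := by
      calc ∑ k ∈ Finset.Ico (n - m) (m + 1), n.choose k
          ≤ (Finset.Ico (n - m) (m + 1)).card • n.choose (n / 2) :=
            Finset.sum_le_card_nsmul _ _ _ (fun k _ => Nat.choose_le_middle k n)
        _ = (m + 1 - (n - m)) * n.choose (n / 2) := by rw [Nat.card_Ico, smul_eq_mul]
        _ ≤ 3 * n.choose (n / 2) := Nat.mul_le_mul_right _ (by omega)
    rw [← etot]
    omega
  have hmid : 8 * n.choose (n / 2) ≤ 2 ^ n := middle_small n hn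
  have hT : 5 * 2 ^ n ≤ 16 * tailB n m := by omega
  rw [tailProb_eq]
  have hpow : (0 : ℝ) < 2 ^ n := by positivity
  rw [le_div_iff₀ hpow]
  have hTR : (5 : ℝ) * 2 ^ n ≤ 16 * tailB n m := by exact_mod_cast hT
  linarith

lemma tailB_geom (n m : ℕ) : 3 ^ (m + 1) * tailB n m ≤ 4 ^ n := by
  calc 3 ^ (m + 1) * tailB n m
      = ∑ k ∈ Finset.Icc (m + 1) n, 3 ^ (m + 1) * n.choose k := by
        rw [tailB, Finset.mul_sum]
    _ ≤ ∑ k ∈ Finset.Icc (m + 1) n, 3 ^ k * n.choose k := by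
        refine Finset.sum_le_sum fun k hk => ?_
        rw [Finset.mem_Icc] at hk
        exact Nat.mul_le_mul_right _ (Nat.pow_le_pow_right (by norm_num) hk.1)
    _ ≤ ∑ k ∈ Finset.range (n + 1), 3 ^ k * n.choose k := by
        refine Finset.sum_le_sum_of_subset fun k hk => ?_
        rw [Finset.mem_Icc] at hk
        rw [Finset.mem_range]
        omega
    _ = 4 ^ n := by
        have h := add_pow (3 : ℕ) 1 n
        simp only [one_pow, mul_one] at h
        norm_num at h
        rw [← h]

end ThresholdNSAux

namespace ThresholdNSAux

lemma bias_f0 (n θ : ℕ) :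
    bias n (fun x => decide (θ < level x)) = tailProb n θ := by
  rw [bias, tailProb]
  congr 1
  refine Finset.sum_congr rfl fun x _ => ?_
  by_cases h : θ < level x <;> simp [h]

lemma eventually_pow_lt (K : ℕ) :
    ∃ N : ℕ, ∀ n : ℕ, N ≤ n → (n : ℝ) ^ K < (27 / 16) ^ n := by
  have h : Filter.Tendsto (fun n : ℕ => (n : ℝ) ^ K * (16 / 27) ^ n)
      Filter.atTop (nhds 0) :=
    tendsto_pow_const_mul_const_pow_of_abs_lt_one K
      (by rw [abs_of_pos (by norm_num : (0:ℝ) < 16/27)]; norm_num)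
  have h2 := h.eventually_lt_const (by norm_num : (0 : ℝ) < 1)
  rw [Filter.eventually_atTop] at h2
  obtain ⟨N, hN⟩ := h2
  refine ⟨N, fun n hn => ?_⟩
  have hlt := hN n hn
  have h3 : ((16 : ℝ) / 27) ^ n * (27 / 16) ^ n = 1 := by
    rw [← mul_pow]; norm_num
  calc (n : ℝ) ^ K = (n : ℝ) ^ K * (16 / 27) ^ n * (27 / 16) ^ n := by
        rw [mul_assoc, h3, mul_one]
    _ < 1 * (27 / 16) ^ n := mul_lt_mul_of_pos_right hlt (by positivity)
    _ = (27 / 16) ^ n := one_mul _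

end ThresholdNSAux

open ThresholdNSAux in
/-- Fix `C1 ≥ 1`. There exist `c > 0` and `N` such that for all `n ≥ N`: if `θ` is
the smallest integer greater than `n/2` with `Pr[L(x) > θ] ≤ 1/n^{C1}`, and
`f0(x) = 1 ↔ L(x) > θ`, then for every `δ` with `1/n ≤ δ ≤ 1/2`,
`c/n^{C1+1} ≤ NS_δ[f0] ≤ 2/n^{C1}`. -/
theorem threshold_noise_sensitivity_bounds (C1 : ℝ) (hC1 : 1 ≤ C1) :
    ∃ c : ℝ, 0 < c ∧ ∃ N : ℕ, ∀ n : ℕ, N ≤ n → ∀ θ : ℕ, isMinimalThreshold C1 n θ →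
      ∀ δ : ℝ, 1 / (n : ℝ) ≤ δ → δ ≤ 1 / 2 →
        c / (n : ℝ) ^ (C1 + 1) ≤ NS n δ (fun x => decide (θ < level x)) ∧
          NS n δ (fun x => decide (θ < level x)) ≤ 2 / (n : ℝ) ^ C1 := by
  obtain ⟨M, hM⟩ := eventually_pow_lt (⌈4 * C1⌉₊)
  refine ⟨2 / 9, by norm_num, max 64 M, fun n hn θ hθ δ hδ1 hδ2 => ?_⟩
  have hn64 : 64 ≤ n := le_trans (le_max_left _ _) hn
  have hnM : M ≤ n := le_trans (le_max_right _ _) hn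
  have hn0' : 0 < n := by omega
  have hn0 : (0 : ℝ) < n := by exact_mod_cast hn0'
  have hn1 : (1 : ℝ) ≤ n := by
    have : 1 ≤ n := by omega
    exact_mod_cast this
  have hn64R : (64 : ℝ) ≤ n := by exact_mod_cast hn64
  have hnC1pos : (0 : ℝ) < (n : ℝ) ^ C1 := Real.rpow_pos_of_pos hn0 _
  have hn_le_rpow : (n : ℝ) ≤ (n : ℝ) ^ C1 := by
    calc (n : ℝ) = (n : ℝ) ^ (1 : ℝ) := (Real.rpow_one _).symm
      _ ≤ (n : ℝ) ^ C1 := Real.rpow_le_rpow_of_exponent_le hn1 hC1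
  have hsmall : 1 / (n : ℝ) ^ C1 ≤ 1 / (n : ℝ) :=
    one_div_le_one_div_of_le hn0 hn_le_rpow
  have h64R : (1 : ℝ) / n ≤ 1 / 64 :=
    one_div_le_one_div_of_le (by norm_num) hn64R
  obtain ⟨hθhalf, hθtail, hθmin⟩ := hθ
  have hδ0 : 0 < δ := lt_of_lt_of_le (by positivity) hδ1
  -- Step 1 : θ ≥ n/2 + 2
  have hθge : n / 2 + 1 ≤ θ := by
    have h2θ : (n : ℝ) < 2 * θ := by linarith
    have : n < 2 * θ := by exact_mod_cast h2θ
    omega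
  have hθne : θ ≠ n / 2 + 1 := by
    intro he
    have h14 : (1 : ℝ) / 4 ≤ tailProb n (n / 2 + 1) := first_threshold_big n hn64
    have ht : tailProb n (n / 2 + 1) ≤ 1 / (n : ℝ) ^ C1 := by rw [← he]; exact hθtail
    linarith
  have hθ2 : n / 2 + 2 ≤ θ := by omega
  -- Step 2 : the previous threshold fails
  have hprev : 1 / (n : ℝ) ^ C1 < tailProb n (θ - 1) := by
    by_contra hcon
    push_neg at hcon
    have hhalf' : (n : ℝ) / 2 < ((θ - 1 : ℕ) : ℝ) := by
      have h1 : n < 2 * (θ - 1) := by omega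
      have h2 : (n : ℝ) < ((2 * (θ - 1) : ℕ) : ℝ) := by exact_mod_cast h1
      push_cast at h2
      linarith
    have := hθmin (θ - 1) hhalf' hcon
    omega
  -- Step 3 : θ < 3n/4
  have hθlt : 4 * θ < 3 * n := by
    by_contra h34
    push_neg at h34
    have hgeom := tailB_geom n (θ - 1)
    rw [show θ - 1 + 1 = θ by omega] at hgeom
    have hR : (3 : ℝ) ^ θ * (tailB n (θ - 1) : ℝ) ≤ 4 ^ n := by exact_mod_cast hgeom
    have htp : tailProb n (θ - 1) = (tailB n (θ - 1) : ℝ) / 2 ^ n := tailProb_eq n (θ - 1)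
    have h3pos : (0 : ℝ) < 3 ^ θ := by positivity
    have h2pos : (0 : ℝ) < 2 ^ n := by positivity
    have h1d : (1 : ℝ) / (n : ℝ) ^ C1 < (tailB n (θ - 1) : ℝ) / 2 ^ n := by
      rw [← htp]; exact hprev
    have h1'' : (2 : ℝ) ^ n < (tailB n (θ - 1) : ℝ) * (n : ℝ) ^ C1 := by
      rw [div_lt_div_iff₀ hnC1pos h2pos] at h1d
      linarith
    have h4 : (4 : ℝ) ^ n = 2 ^ n * 2 ^ n := by
      rw [show (4 : ℝ) = 2 * 2 by norm_num, mul_pow]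
    have hkey : (3 : ℝ) ^ θ < 2 ^ n * (n : ℝ) ^ C1 := by
      have ha : (3 : ℝ) ^ θ * 2 ^ n < 3 ^ θ * ((tailB n (θ - 1) : ℝ) * (n : ℝ) ^ C1) :=
        mul_lt_mul_of_pos_left h1'' h3pos
      have hb : (3 : ℝ) ^ θ * (tailB n (θ - 1) : ℝ) * (n : ℝ) ^ C1
          ≤ 4 ^ n * (n : ℝ) ^ C1 :=
        mul_le_mul_of_nonneg_right hR (le_of_lt hnC1pos)
      have hc : (3 : ℝ) ^ θ * 2 ^ n < (2 ^ n * (n : ℝ) ^ C1) * 2 ^ n := by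
        rw [h4] at hb
        nlinarith
      exact lt_of_mul_lt_mul_right hc (le_of_lt h2pos)
    have h4th : ((3 : ℝ) ^ θ) ^ 4 < (2 ^ n * (n : ℝ) ^ C1) ^ 4 :=
      pow_lt_pow_left₀ hkey (by positivity) (by norm_num)
    have h27 : ((27 : ℝ)) ^ n ≤ ((3 : ℝ) ^ θ) ^ 4 := by
      rw [← pow_mul]
      calc (27 : ℝ) ^ n = 3 ^ (3 * n) := by rw [pow_mul]; norm_num
        _ ≤ 3 ^ (θ * 4) := by
            apply pow_le_pow_right₀ (by norm_num)
            omega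
    have hC14 : ((n : ℝ) ^ C1) ^ 4 ≤ (n : ℝ) ^ (⌈4 * C1⌉₊ : ℕ) := by
      have he1 : ((n : ℝ) ^ C1) ^ 4 = (n : ℝ) ^ (C1 * 4) := by
        rw [← Real.rpow_natCast ((n : ℝ) ^ C1) 4, ← Real.rpow_mul (le_of_lt hn0)]
        norm_num
      rw [he1, ← Real.rpow_natCast (n : ℝ) (⌈4 * C1⌉₊)]
      apply Real.rpow_le_rpow_of_exponent_le hn1
      calc C1 * 4 = 4 * C1 := by ring
        _ ≤ (⌈4 * C1⌉₊ : ℝ) := Nat.le_ceil _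
    have h16 : ((2 : ℝ) ^ n) ^ 4 = 16 ^ n := by
      rw [← pow_mul, mul_comm n 4, pow_mul]
      norm_num
    have hKn := hM n hnM
    have h16pos : (0 : ℝ) < 16 ^ n := by positivity
    have hfin : ((27 : ℝ) / 16) ^ n * 16 ^ n = 27 ^ n := by
      rw [← mul_pow]; norm_num
    have hstep : (2 ^ n * (n : ℝ) ^ C1) ^ 4 = ((2 : ℝ) ^ n) ^ 4 * ((n : ℝ) ^ C1) ^ 4 :=
      mul_pow _ _ 4
    have hx1 : ((2 : ℝ) ^ n) ^ 4 * ((n : ℝ) ^ C1) ^ 4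
        ≤ 16 ^ n * (n : ℝ) ^ (⌈4 * C1⌉₊ : ℕ) := by
      rw [h16]
      exact mul_le_mul_of_nonneg_left hC14 (le_of_lt h16pos)
    have hx2 : (16 : ℝ) ^ n * (n : ℝ) ^ (⌈4 * C1⌉₊ : ℕ) < 16 ^ n * (27 / 16) ^ n :=
      mul_lt_mul_of_pos_left hKn h16pos
    have hx3 : (16 : ℝ) ^ n * (27 / 16) ^ n = 27 ^ n := by
      rw [mul_comm]; exact hfin
    linarith
  -- Step 4 : tail ratio bound
  have hθn : θ + 1 ≤ n := by omega
  have hratio : n.choose θ ≤ 8 * n.choose (θ + 1) := by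
    have hid := Nat.choose_succ_right_eq n θ
    have h8 : θ + 1 ≤ 8 * (n - θ) := by omega
    have h1 : n.choose θ * (n - θ) ≤ 8 * n.choose (θ + 1) * (n - θ) := by
      calc n.choose θ * (n - θ) = n.choose (θ + 1) * (θ + 1) := hid.symm
        _ ≤ n.choose (θ + 1) * (8 * (n - θ)) := Nat.mul_le_mul_left _ h8
        _ = 8 * n.choose (θ + 1) * (n - θ) := by ring
    exact Nat.le_of_mul_le_mul_right h1 (by omega)
  have hsingle : n.choose (θ + 1) ≤ tailB n θ := by
    rw [tailB]
    exact Finset.single_le_sum (fun k _ => Nat.zero_le _)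
      (Finset.mem_Icc.mpr ⟨le_refl _, hθn⟩)
  have hsplitT : tailB n (θ - 1) = n.choose θ + tailB n θ := by
    rw [tailB, tailB, show θ - 1 + 1 = θ by omega]
    rw [← Finset.Ico_add_one_right_eq_Icc, ← Finset.Ico_add_one_right_eq_Icc]
    rw [← Finset.sum_Ico_consecutive (fun k => n.choose k)
      (show θ ≤ θ + 1 by omega) (show θ + 1 ≤ n + 1 by omega)]
    rw [Nat.Ico_succ_singleton, Finset.sum_singleton]
  have h9 : tailB n (θ - 1) ≤ 9 * tailB n θ := by omega
  have hlow : 1 / (9 * (n : ℝ) ^ C1) < tailProb n θ := by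
    have e1 : tailProb n (θ - 1) = (tailB n (θ - 1) : ℝ) / 2 ^ n := tailProb_eq n (θ - 1)
    have e2 : tailProb n θ = (tailB n θ : ℝ) / 2 ^ n := tailProb_eq n θ
    have h9R : (tailB n (θ - 1) : ℝ) ≤ 9 * (tailB n θ : ℝ) := by exact_mod_cast h9
    have h2pos : (0 : ℝ) < 2 ^ n := by positivity
    have hch : 1 / (n : ℝ) ^ C1 < 9 * tailProb n θ := by
      rw [e2]
      rw [e1] at hprev
      have : (tailB n (θ - 1) : ℝ) / 2 ^ n ≤ 9 * ((tailB n θ : ℝ) / 2 ^ n) := by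
        rw [div_le_iff₀ h2pos]
        calc (tailB n (θ - 1) : ℝ) ≤ 9 * (tailB n θ : ℝ) := h9R
          _ = 9 * ((tailB n θ : ℝ) / 2 ^ n) * 2 ^ n := by field_simp
      linarith
    rw [show (9 : ℝ) * (n : ℝ) ^ C1 = (n : ℝ) ^ C1 * 9 by ring, ← div_div]
    rw [div_lt_iff₀ (by norm_num : (0:ℝ) < 9)]
    calc 1 / (n : ℝ) ^ C1 < 9 * tailProb n θ := hch
      _ = tailProb n θ * 9 := by ring
  -- Final assembly
  have hbias := bias_f0 n θ
  have hp1 : tailProb n θ ≤ 1 / 2 := by linarith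
  have hppos : 0 < tailProb n θ := lt_trans (by positivity) hlow
  constructor
  · -- lower bound
    have hNSge := NS_ge n (fun x => decide (θ < level x)) (le_of_lt hδ0) hδ2
    rw [hbias] at hNSge
    have h1p : (1 : ℝ) / 2 ≤ 1 - tailProb n θ := by linarith
    calc (2 : ℝ) / 9 / (n : ℝ) ^ (C1 + 1)
        = 4 * (1 / n) * (1 / (9 * (n : ℝ) ^ C1) * (1 / 2)) := by
          rw [Real.rpow_add hn0, Real.rpow_one]
          field_simp
          ring
      _ ≤ 4 * δ * (tailProb n θ * (1 - tailProb n θ)) := by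
          have hbc : 1 / (9 * (n : ℝ) ^ C1) * (1 / 2)
              ≤ tailProb n θ * (1 - tailProb n θ) := by
            apply mul_le_mul (le_of_lt hlow) h1p (by norm_num)
              (le_of_lt hppos)
          have hbc0 : (0:ℝ) ≤ 1 / (9 * (n : ℝ) ^ C1) * (1 / 2) := by positivity
          have h1 : 4 * (1 / (n:ℝ)) * (1 / (9 * (n : ℝ) ^ C1) * (1 / 2))
              ≤ 4 * δ * (1 / (9 * (n : ℝ) ^ C1) * (1 / 2)) := by
            apply mul_le_mul_of_nonneg_right _ hbc0
            linarith
          have h2 : 4 * δ * (1 / (9 * (n : ℝ) ^ C1) * (1 / 2))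
              ≤ 4 * δ * (tailProb n θ * (1 - tailProb n θ)) := by
            apply mul_le_mul_of_nonneg_left hbc
            linarith
          linarith
      _ ≤ NS n δ (fun x => decide (θ < level x)) := hNSge
  · -- upper bound
    have hNSle := NS_le n (fun x => decide (θ < level x)) (le_of_lt hδ0) (by linarith)
    rw [hbias] at hNSle
    calc NS n δ (fun x => decide (θ < level x)) ≤ 2 * tailProb n θ := hNSle
      _ ≤ 2 * (1 / (n : ℝ) ^ C1) := by linarith
      _ = 2 / (n : ℝ) ^ C1 := by ring
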